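/- Let A, B, C be finite-dimensional vector spaces over F₂ = ZMod 2, and let f : A →ₗ B, g : B →ₗ C, s : A →ₗ C be linear maps with g ∘ f = 0. Then there exist natural numbers s₁, s₂, s₃, p₁, p₂, x₁, x₂, x₃, x₄ and linear equivalences α : A ≃ A₀, β : B ≃ B₀, γ : C ≃ C₀ onto the underlying spaces of the direct sum quiver Q₀ = s₁·(S-1) ⊕ s₂·(S-2) ⊕ s₃·(S-3) ⊕ p₁·(P-1) ⊕ p₂·(P-2) ⊕ x₁·(X-1) ⊕ x₂·(X-2) ⊕ x₃·(X-3) ⊕ x₄·(X-4), such that β ∘ f = f₀ ∘ α, γ ∘ g = g₀ ∘ β, and γ ∘ s = s₀ ∘ α, where (f₀, g₀, s₀) are the structure maps of Q₀. In other words, every quiver (A, B, C, f, g, s) over F₂ with gf = 0 is isomorphic to a finite direct sum of the nine indecomposable quivers (S-1), (S-2), (S-3), (P-1), (P-2), (X-1), (X-2), (X-3), (X-4). -/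

import Mathlib

/-! Concrete model for the direct sum
`s₁·(S-1) ⊕ s₂·(S-2) ⊕ s₃·(S-3) ⊕ p₁·(P-1) ⊕ p₂·(P-2) ⊕ x₁·(X-1) ⊕ x₂·(X-2) ⊕ x₃·(X-3) ⊕ x₄·(X-4)`
of the nine indecomposable quivers over `F₂ = ZMod 2`, where
(S-1) = (F₂,0,0), (S-2) = (0,F₂,0), (S-3) = (0,0,F₂) (all maps zero);
(P-1) = (F₂,F₂,0) with f = id; (P-2) = (0,F₂,F₂) with g = id;
(X-1) = (F₂,0,F₂) with s = id; (X-2) = (F₂,F₂,F₂) with f = id, s = id, g = 0;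
(X-3) = (F₂,F₂,F₂) with f = 0, g = id, s = id;
(X-4) = (F₂,F₂⊕F₂,F₂) with f x = (x,0), g (y₁,y₂) = y₂, s = id. -/

abbrev F2 := ZMod 2

/-- The `A`-space of the direct sum quiver: one `F₂` summand for each copy of
(S-1), (P-1), (X-1), (X-2), (X-3), (X-4). -/
abbrev QA (s₁ p₁ x₁ x₂ x₃ x₄ : ℕ) :=
  (Fin s₁ → F2) × (Fin p₁ → F2) × (Fin x₁ → F2) × (Fin x₂ → F2) × (Fin x₃ → F2) ×
    (Fin x₄ → F2)

/-- The `B`-space of the direct sum quiver: one `F₂` summand for each copy of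
(S-2), (P-1), (P-2), (X-2), (X-3), and one `F₂ ⊕ F₂` summand for each copy of (X-4). -/
abbrev QB (s₂ p₁ p₂ x₂ x₃ x₄ : ℕ) :=
  (Fin s₂ → F2) × (Fin p₁ → F2) × (Fin p₂ → F2) × (Fin x₂ → F2) × (Fin x₃ → F2) ×
    (Fin x₄ → F2 × F2)

/-- The `C`-space of the direct sum quiver: one `F₂` summand for each copy of
(S-3), (P-2), (X-1), (X-2), (X-3), (X-4). -/
abbrev QC (s₃ p₂ x₁ x₂ x₃ x₄ : ℕ) :=
  (Fin s₃ → F2) × (Fin p₂ → F2) × (Fin x₁ → F2) × (Fin x₂ → F2) × (Fin x₃ → F2) ×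
    (Fin x₄ → F2)

/-- The structure map `f₀ : A₀ → B₀` of the direct sum quiver. -/
def fQ {s₁ s₂ p₁ p₂ x₁ x₂ x₃ x₄ : ℕ} :
    QA s₁ p₁ x₁ x₂ x₃ x₄ →ₗ[F2] QB s₂ p₁ p₂ x₂ x₃ x₄ where
  toFun a := (0, a.2.1, 0, a.2.2.2.1, 0, fun m => (a.2.2.2.2.2 m, 0))
  map_add' a b := by ext <;> simp
  map_smul' c a := by ext <;> simp

/-- The structure map `g₀ : B₀ → C₀` of the direct sum quiver. -/
def gQ {s₂ s₃ p₁ p₂ x₁ x₂ x₃ x₄ : ℕ} :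
    QB s₂ p₁ p₂ x₂ x₃ x₄ →ₗ[F2] QC s₃ p₂ x₁ x₂ x₃ x₄ where
  toFun b := (0, b.2.2.1, 0, 0, b.2.2.2.2.1, fun m => (b.2.2.2.2.2 m).2)
  map_add' a b := by ext <;> simp
  map_smul' c a := by ext <;> simp

/-- The structure map `s₀ : A₀ → C₀` of the direct sum quiver. -/
def sQ {s₁ s₃ p₁ p₂ x₁ x₂ x₃ x₄ : ℕ} :
    QA s₁ p₁ x₁ x₂ x₃ x₄ →ₗ[F2] QC s₃ p₂ x₁ x₂ x₃ x₄ where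
  toFun a := (0, 0, a.2.2.1, a.2.2.2.1, a.2.2.2.2.1, a.2.2.2.2.2)
  map_add' a b := by ext <;> simp
  map_smul' c a := by ext <;> simp

/-- The quiver `(A, B, C, f, g, s)` is isomorphic to the direct sum of the nine
indecomposable quivers with multiplicities `(s₁, s₂, s₃, p₁, p₂, x₁, x₂, x₃, x₄)`. -/
def IsQuiverDecomposition
    (A B C : Type) [AddCommGroup A] [Module F2 A]
    [AddCommGroup B] [Module F2 B] [AddCommGroup C] [Module F2 C]
    (f : A →ₗ[F2] B) (g : B →ₗ[F2] C) (s : A →ₗ[F2] C)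
    (s₁ s₂ s₃ p₁ p₂ x₁ x₂ x₃ x₄ : ℕ) : Prop :=
  ∃ (α : A ≃ₗ[F2] QA s₁ p₁ x₁ x₂ x₃ x₄)
    (β : B ≃ₗ[F2] QB s₂ p₁ p₂ x₂ x₃ x₄)
    (γ : C ≃ₗ[F2] QC s₃ p₂ x₁ x₂ x₃ x₄),
    (∀ a, β (f a) = fQ (α a)) ∧ (∀ b, γ (g b) = gQ (β b)) ∧ (∀ a, γ (s a) = sQ (α a))

open Submodule LinearMap Set

section Helpers

variable {V W : Type} [AddCommGroup V] [Module F2 V] [AddCommGroup W] [Module F2 W]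

/-- Relative complement of a submodule inside a larger submodule. -/
lemma relcompl {p q : Submodule F2 V} (h : p ≤ q) :
    ∃ r : Submodule F2 V, r ≤ q ∧ Disjoint p r ∧ p ⊔ r = q := by
  obtain ⟨r', hr'⟩ := Submodule.exists_isCompl (p.comap q.subtype)
  refine ⟨r'.map q.subtype, map_subtype_le q r', ?_, ?_⟩
  · rw [disjoint_iff_inf_le]
    rintro x ⟨hxp, hxr⟩
    obtain ⟨y, hy, rfl⟩ := hxr
    have hyp : y ∈ p.comap q.subtype := hxp
    have : y ∈ (⊥ : Submodule F2 q) := hr'.disjoint.le_bot ⟨hyp, hy⟩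
    simp only [Submodule.mem_bot] at this
    simp [this]
  · have hp : p = (p.comap q.subtype).map q.subtype := by
      rw [Submodule.map_comap_subtype, inf_of_le_right h]
    rw [hp, ← Submodule.map_sup, hr'.sup_eq_top, Submodule.map_top, range_subtype]

/-- A finite spanning independent family for any submodule. -/
lemma exists_fam (p : Submodule F2 V) [FiniteDimensional F2 V] :
    ∃ (n : ℕ) (v : Fin n → V), LinearIndependent F2 v ∧ span F2 (range v) = p := by
  let b := Module.finBasis F2 p
  refine ⟨_, fun i => (b i : V), ?_, ?_⟩
  · exact b.linearIndependent.map' p.subtype (ker_subtype p)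
  · have : range (fun i => (b i : V)) = p.subtype '' (range b) := by
      rw [← Set.range_comp]; rfl
    rw [this, ← Submodule.map_span, b.span_eq, Submodule.map_top, range_subtype]

lemma eq_top_of (sm : V →ₗ[F2] W) (X : Submodule F2 V) (h1 : ker sm ≤ X)
    (h2 : LinearMap.range sm ≤ X.map sm) : X = ⊤ := by
  rw [eq_top_iff]
  intro a _
  obtain ⟨x, hx, hxa⟩ := h2 ⟨a, rfl⟩
  have hk : a - x ∈ ker sm := by
    simp only [mem_ker, map_sub, hxa, sub_self]
  have : a = x + (a - x) := by abel
  rw [this]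
  exact X.add_mem hx (h1 hk)

lemma disjoint_span_ker {ι : Type} [Fintype ι] {v : ι → V} (sm : V →ₗ[F2] W)
    (h : LinearIndependent F2 (⇑sm ∘ v)) : Disjoint (span F2 (range v)) (ker sm) := by
  rw [disjoint_iff_inf_le]
  rintro x ⟨hx1, hx2⟩
  obtain ⟨c, hc⟩ := (mem_span_range_iff_exists_fun F2).mp hx1
  have h0 : ∑ i, c i • (⇑sm ∘ v) i = 0 := by
    simp only [Function.comp_apply, ← map_smul, ← map_sum, hc]
    exact hx2
  have hz := Fintype.linearIndependent_iff.mp h c h0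
  have : x = 0 := by rw [← hc]; simp [hz]
  simp [this]

lemma li_elim {ι κ : Type} {v : ι → V} {w : κ → V}
    {p q : Submodule F2 V} (hv : LinearIndependent F2 v) (hw : LinearIndependent F2 w)
    (hvp : span F2 (range v) = p) (hwq : span F2 (range w) = q) (h : Disjoint p q) :
    LinearIndependent F2 (Sum.elim v w) ∧ span F2 (range (Sum.elim v w)) = p ⊔ q := by
  constructor
  · exact hv.sum_type hw (by rw [hvp, hwq]; exact h)
  · rw [Sum.elim_range, span_union, hvp, hwq]

lemma map_ker_sup (fm : V →ₗ[F2] W) (X : Submodule F2 V) :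
    (LinearMap.ker fm ⊔ X).map fm = X.map fm := by
  apply le_antisymm
  · rintro y ⟨x, hx, rfl⟩
    obtain ⟨k, hk, w, hw, rfl⟩ := Submodule.mem_sup.mp hx
    rw [map_add, LinearMap.mem_ker.mp hk, zero_add]
    exact Submodule.mem_map_of_mem hw
  · exact Submodule.map_mono le_sup_right

end Helpers

noncomputable section QuiverBases
def bF22 : Module.Basis (Unit ⊕ Unit) F2 (F2 × F2) :=
  (Module.Basis.singleton Unit F2).prod (Module.Basis.singleton Unit F2)

def basisQA (s₁ p₁ x₁ x₂ x₃ x₄ : ℕ) :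
    Module.Basis (Fin s₁ ⊕ (Fin p₁ ⊕ (Fin x₁ ⊕ (Fin x₂ ⊕ (Fin x₃ ⊕ Fin x₄))))) F2
      (QA s₁ p₁ x₁ x₂ x₃ x₄) :=
  (Pi.basisFun F2 (Fin s₁)).prod ((Pi.basisFun F2 (Fin p₁)).prod
    ((Pi.basisFun F2 (Fin x₁)).prod ((Pi.basisFun F2 (Fin x₂)).prod
      ((Pi.basisFun F2 (Fin x₃)).prod (Pi.basisFun F2 (Fin x₄))))))

def basisQB (s₂ p₁ p₂ x₂ x₃ x₄ : ℕ) :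
    Module.Basis (Fin s₂ ⊕ (Fin p₁ ⊕ (Fin p₂ ⊕ (Fin x₂ ⊕ (Fin x₃ ⊕ ((_ : Fin x₄) × (Unit ⊕ Unit))))))) F2
      (QB s₂ p₁ p₂ x₂ x₃ x₄) :=
  (Pi.basisFun F2 (Fin s₂)).prod ((Pi.basisFun F2 (Fin p₁)).prod
    ((Pi.basisFun F2 (Fin p₂)).prod ((Pi.basisFun F2 (Fin x₂)).prod
      ((Pi.basisFun F2 (Fin x₃)).prod (Pi.basis fun _ : Fin x₄ => bF22)))))

def basisQC (s₃ p₂ x₁ x₂ x₃ x₄ : ℕ) :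
    Module.Basis (Fin s₃ ⊕ (Fin p₂ ⊕ (Fin x₁ ⊕ (Fin x₂ ⊕ (Fin x₃ ⊕ Fin x₄))))) F2
      (QC s₃ p₂ x₁ x₂ x₃ x₄) :=
  (Pi.basisFun F2 (Fin s₃)).prod ((Pi.basisFun F2 (Fin p₂)).prod
    ((Pi.basisFun F2 (Fin x₁)).prod ((Pi.basisFun F2 (Fin x₂)).prod
      ((Pi.basisFun F2 (Fin x₃)).prod (Pi.basisFun F2 (Fin x₄))))))


section ValueLemmas
variable (s₁ s₂ s₃ p₁ p₂ x₁ x₂ x₃ x₄ : ℕ)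

lemma fQ_a1 (j : Fin s₁) :
    fQ (s₂ := s₂) (p₂ := p₂) (basisQA s₁ p₁ x₁ x₂ x₃ x₄ (Sum.inl j)) = 0 := by
  simp [basisQA, Module.Basis.prod_apply, Pi.basisFun_apply, fQ]; try rfl

lemma fQ_a2 (j : Fin p₁) :
    fQ (s₂ := s₂) (p₂ := p₂) (basisQA s₁ p₁ x₁ x₂ x₃ x₄ (Sum.inr (Sum.inl j))) =
      basisQB s₂ p₁ p₂ x₂ x₃ x₄ (Sum.inr (Sum.inl j)) := by
  simp [basisQA, basisQB, Module.Basis.prod_apply, Pi.basisFun_apply, fQ]; try rfl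

lemma fQ_a3 (j : Fin x₁) :
    fQ (s₂ := s₂) (p₂ := p₂) (basisQA s₁ p₁ x₁ x₂ x₃ x₄ (Sum.inr (Sum.inr (Sum.inl j)))) = 0 := by
  simp [basisQA, Module.Basis.prod_apply, Pi.basisFun_apply, fQ]; try rfl

lemma fQ_a4 (j : Fin x₂) :
    fQ (s₂ := s₂) (p₂ := p₂)
        (basisQA s₁ p₁ x₁ x₂ x₃ x₄ (Sum.inr (Sum.inr (Sum.inr (Sum.inl j))))) =
      basisQB s₂ p₁ p₂ x₂ x₃ x₄ (Sum.inr (Sum.inr (Sum.inr (Sum.inl j)))) := by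
  simp [basisQA, basisQB, Module.Basis.prod_apply, Pi.basisFun_apply, fQ]; try rfl

lemma fQ_a5 (j : Fin x₃) :
    fQ (s₂ := s₂) (p₂ := p₂)
        (basisQA s₁ p₁ x₁ x₂ x₃ x₄ (Sum.inr (Sum.inr (Sum.inr (Sum.inr (Sum.inl j)))))) = 0 := by
  simp [basisQA, Module.Basis.prod_apply, Pi.basisFun_apply, fQ]; try rfl

lemma fQ_a6 (j : Fin x₄) :
    fQ (s₂ := s₂) (p₂ := p₂)
        (basisQA s₁ p₁ x₁ x₂ x₃ x₄ (Sum.inr (Sum.inr (Sum.inr (Sum.inr (Sum.inr j)))))) =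
      basisQB s₂ p₁ p₂ x₂ x₃ x₄
        (Sum.inr (Sum.inr (Sum.inr (Sum.inr (Sum.inr ⟨j, Sum.inl ()⟩))))) := by
  simp [basisQA, basisQB, Module.Basis.prod_apply, Pi.basisFun_apply, fQ, bF22, Pi.basis_apply]
  funext m
  by_cases h : m = j
  · subst h; simp
  · simp [Pi.single_apply, h]

lemma gQ_b1 (j : Fin s₂) :
    gQ (s₃ := s₃) (x₁ := x₁) (basisQB s₂ p₁ p₂ x₂ x₃ x₄ (Sum.inl j)) = 0 := by
  simp [basisQB, Module.Basis.prod_apply, Pi.basisFun_apply, gQ]; try rfl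

lemma gQ_b2 (j : Fin p₁) :
    gQ (s₃ := s₃) (x₁ := x₁) (basisQB s₂ p₁ p₂ x₂ x₃ x₄ (Sum.inr (Sum.inl j))) = 0 := by
  simp [basisQB, Module.Basis.prod_apply, Pi.basisFun_apply, gQ]; try rfl

lemma gQ_b3 (j : Fin p₂) :
    gQ (s₃ := s₃) (x₁ := x₁) (basisQB s₂ p₁ p₂ x₂ x₃ x₄ (Sum.inr (Sum.inr (Sum.inl j)))) =
      basisQC s₃ p₂ x₁ x₂ x₃ x₄ (Sum.inr (Sum.inl j)) := by
  simp [basisQB, basisQC, Module.Basis.prod_apply, Pi.basisFun_apply, gQ]; try rfl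

lemma gQ_b4 (j : Fin x₂) :
    gQ (s₃ := s₃) (x₁ := x₁)
        (basisQB s₂ p₁ p₂ x₂ x₃ x₄ (Sum.inr (Sum.inr (Sum.inr (Sum.inl j))))) = 0 := by
  simp [basisQB, Module.Basis.prod_apply, Pi.basisFun_apply, gQ]; try rfl

lemma gQ_b5 (j : Fin x₃) :
    gQ (s₃ := s₃) (x₁ := x₁)
        (basisQB s₂ p₁ p₂ x₂ x₃ x₄ (Sum.inr (Sum.inr (Sum.inr (Sum.inr (Sum.inl j)))))) =
      basisQC s₃ p₂ x₁ x₂ x₃ x₄ (Sum.inr (Sum.inr (Sum.inr (Sum.inr (Sum.inl j))))) := by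
  simp [basisQB, basisQC, Module.Basis.prod_apply, Pi.basisFun_apply, gQ]; try rfl

lemma gQ_b6 (j : Fin x₄) :
    gQ (s₃ := s₃) (x₁ := x₁)
        (basisQB s₂ p₁ p₂ x₂ x₃ x₄
          (Sum.inr (Sum.inr (Sum.inr (Sum.inr (Sum.inr ⟨j, Sum.inl ()⟩)))))) = 0 := by
  simp [basisQB, Module.Basis.prod_apply, Pi.basisFun_apply, gQ, bF22, Pi.basis_apply]
  funext m
  by_cases h : m = j
  · subst h; simp
  · simp [Pi.single_apply, h]

lemma gQ_b7 (j : Fin x₄) :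
    gQ (s₃ := s₃) (x₁ := x₁)
        (basisQB s₂ p₁ p₂ x₂ x₃ x₄
          (Sum.inr (Sum.inr (Sum.inr (Sum.inr (Sum.inr ⟨j, Sum.inr ()⟩)))))) =
      basisQC s₃ p₂ x₁ x₂ x₃ x₄ (Sum.inr (Sum.inr (Sum.inr (Sum.inr (Sum.inr j))))) := by
  simp [basisQB, basisQC, Module.Basis.prod_apply, Pi.basisFun_apply, gQ, bF22, Pi.basis_apply]
  funext m
  by_cases h : m = j
  · subst h; simp
  · simp [Pi.single_apply, h]

lemma sQ_a1 (j : Fin s₁) :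
    sQ (s₃ := s₃) (p₂ := p₂) (basisQA s₁ p₁ x₁ x₂ x₃ x₄ (Sum.inl j)) = 0 := by
  simp [basisQA, Module.Basis.prod_apply, Pi.basisFun_apply, sQ]; try rfl

lemma sQ_a2 (j : Fin p₁) :
    sQ (s₃ := s₃) (p₂ := p₂) (basisQA s₁ p₁ x₁ x₂ x₃ x₄ (Sum.inr (Sum.inl j))) = 0 := by
  simp [basisQA, Module.Basis.prod_apply, Pi.basisFun_apply, sQ]; try rfl

lemma sQ_a3 (j : Fin x₁) :
    sQ (s₃ := s₃) (p₂ := p₂) (basisQA s₁ p₁ x₁ x₂ x₃ x₄ (Sum.inr (Sum.inr (Sum.inl j)))) =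
      basisQC s₃ p₂ x₁ x₂ x₃ x₄ (Sum.inr (Sum.inr (Sum.inl j))) := by
  simp [basisQA, basisQC, Module.Basis.prod_apply, Pi.basisFun_apply, sQ]; try rfl

lemma sQ_a4 (j : Fin x₂) :
    sQ (s₃ := s₃) (p₂ := p₂)
        (basisQA s₁ p₁ x₁ x₂ x₃ x₄ (Sum.inr (Sum.inr (Sum.inr (Sum.inl j))))) =
      basisQC s₃ p₂ x₁ x₂ x₃ x₄ (Sum.inr (Sum.inr (Sum.inr (Sum.inl j)))) := by
  simp [basisQA, basisQC, Module.Basis.prod_apply, Pi.basisFun_apply, sQ]; try rfl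

lemma sQ_a5 (j : Fin x₃) :
    sQ (s₃ := s₃) (p₂ := p₂)
        (basisQA s₁ p₁ x₁ x₂ x₃ x₄ (Sum.inr (Sum.inr (Sum.inr (Sum.inr (Sum.inl j)))))) =
      basisQC s₃ p₂ x₁ x₂ x₃ x₄ (Sum.inr (Sum.inr (Sum.inr (Sum.inr (Sum.inl j))))) := by
  simp [basisQA, basisQC, Module.Basis.prod_apply, Pi.basisFun_apply, sQ]; try rfl

lemma sQ_a6 (j : Fin x₄) :
    sQ (s₃ := s₃) (p₂ := p₂)
        (basisQA s₁ p₁ x₁ x₂ x₃ x₄ (Sum.inr (Sum.inr (Sum.inr (Sum.inr (Sum.inr j)))))) =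
      basisQC s₃ p₂ x₁ x₂ x₃ x₄ (Sum.inr (Sum.inr (Sum.inr (Sum.inr (Sum.inr j))))) := by
  simp [basisQA, basisQC, Module.Basis.prod_apply, Pi.basisFun_apply, sQ]; try rfl

end ValueLemmas
end QuiverBases

set_option maxHeartbeats 3200000 in
/-- Every quiver `(A, B, C, f, g, s)` of finite-dimensional `F₂`-vector spaces with
`g ∘ f = 0` is isomorphic to a finite direct sum of the nine indecomposable quivers
(S-1), (S-2), (S-3), (P-1), (P-2), (X-1), (X-2), (X-3), (X-4). -/
theorem quiver_decomposes
    (A B C : Type) [AddCommGroup A] [Module F2 A] [FiniteDimensional F2 A]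
    [AddCommGroup B] [Module F2 B] [FiniteDimensional F2 B]
    [AddCommGroup C] [Module F2 C] [FiniteDimensional F2 C]
    (f : A →ₗ[F2] B) (g : B →ₗ[F2] C) (s : A →ₗ[F2] C)
    (hgf : g ∘ₗ f = 0) :
    ∃ s₁ s₂ s₃ p₁ p₂ x₁ x₂ x₃ x₄ : ℕ,
      IsQuiverDecomposition A B C f g s s₁ s₂ s₃ p₁ p₂ x₁ x₂ x₃ x₄ := by
  classical
  -- C-side submodules
  set G := LinearMap.range g with hGdef
  set T := LinearMap.range s with hTdef
  set Sg := (LinearMap.ker f).map s with hSgdef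
  have hSgT : Sg ≤ T := LinearMap.map_le_range
  set I := T ⊓ G with hIdef
  set C1 := Sg ⊓ G with hC1def
  have hC1I : C1 ≤ I := inf_le_inf_right G hSgT
  have hC1Sg : C1 ≤ Sg := inf_le_left
  have hC1G : C1 ≤ G := inf_le_right
  have hIT : I ≤ T := inf_le_left
  have hIG : I ≤ G := inf_le_right
  obtain ⟨C3, hC3I, hdC13, hsC13⟩ := relcompl hC1I
  obtain ⟨C2, hC2Sg, hdC12, hsC12⟩ := relcompl hC1Sg
  have hSgIT : Sg ⊔ I ≤ T := sup_le hSgT hIT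
  obtain ⟨C4, hC4T, hdC4, hsC4⟩ := relcompl hSgIT
  obtain ⟨C5, hC5G, hdC5, hsC5⟩ := relcompl hIG
  obtain ⟨C6, -, hdC6, hsC6⟩ := relcompl (le_top : T ⊔ G ≤ ⊤)
  -- families spanning the C-pieces
  obtain ⟨x₃, c1, hlc1, hspc1⟩ := exists_fam C1
  obtain ⟨x₄, c3, hlc3, hspc3⟩ := exists_fam C3
  obtain ⟨x₁, c2, hlc2, hspc2⟩ := exists_fam C2
  obtain ⟨x₂, c4, hlc4, hspc4⟩ := exists_fam C4
  obtain ⟨p₂, c5, hlc5, hspc5⟩ := exists_fam C5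
  obtain ⟨s₃, c6, hlc6, hspc6⟩ := exists_fam C6
  have hc1m : ∀ i, c1 i ∈ C1 := fun i => hspc1 ▸ subset_span (mem_range_self i)
  have hc3m : ∀ i, c3 i ∈ C3 := fun i => hspc3 ▸ subset_span (mem_range_self i)
  have hc2m : ∀ i, c2 i ∈ C2 := fun i => hspc2 ▸ subset_span (mem_range_self i)
  have hc4m : ∀ i, c4 i ∈ C4 := fun i => hspc4 ▸ subset_span (mem_range_self i)
  have hc5m : ∀ i, c5 i ∈ C5 := fun i => hspc5 ▸ subset_span (mem_range_self i)
  -- the C-basis family, in the order (C6, C5, C2, C4, C1, C3)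
  obtain ⟨hliW13, hspW13'⟩ := li_elim hlc1 hlc3 hspc1 hspc3 hdC13
  have hspW13 : span F2 (range (Sum.elim c1 c3)) = I := by rw [hspW13', hsC13]
  have hdC4I : Disjoint C4 I := (hdC4.mono_left le_sup_right).symm
  obtain ⟨hliW413, hspW413⟩ := li_elim hlc4 hliW13 hspc4 hspW13 hdC4I
  have hdC2_4I : Disjoint C2 (C4 ⊔ I) := by
    refine Submodule.disjoint_def.mpr fun x hx2 hx4I => ?_
    obtain ⟨y4, hy4, yI, hyI, rfl⟩ := Submodule.mem_sup.mp hx4I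
    have hy40 : y4 = 0 := by
      have hmem : y4 ∈ Sg ⊔ I := by
        have h1 : y4 + yI - yI ∈ Sg ⊔ I :=
          Submodule.sub_mem _ (Submodule.mem_sup_left (hC2Sg hx2))
            (Submodule.mem_sup_right hyI)
        simpa using h1
      exact Submodule.disjoint_def.mp hdC4 y4 hmem hy4
    rw [hy40, zero_add] at hx2 ⊢
    have hyC1 : yI ∈ C1 := Submodule.mem_inf.mpr ⟨hC2Sg hx2, hIG hyI⟩
    exact Submodule.disjoint_def.mp hdC12 yI hyC1 hx2
  obtain ⟨hliW2413, hspW2413'⟩ := li_elim hlc2 hliW413 hspc2 hspW413 hdC2_4I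
  have hsupCI : C2 ⊔ (C4 ⊔ I) = T := by
    have e1 : C2 ⊔ (C4 ⊔ I) = (C2 ⊔ I) ⊔ C4 := by
      rw [sup_comm C4 I, ← sup_assoc]
    have e2 : C2 ⊔ I = Sg ⊔ I := by
      rw [← hsC12, sup_comm C1 C2, sup_assoc, sup_eq_right.mpr hC1I]
    rw [e1, e2, hsC4]
  have hspW2413 : span F2 (range (Sum.elim c2 (Sum.elim c4 (Sum.elim c1 c3)))) = T := by
    rw [hspW2413', hsupCI]
  have hdC5T : Disjoint C5 T :=
    Submodule.disjoint_def.mpr fun x hx5 hxT =>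
      Submodule.disjoint_def.mp hdC5 x (Submodule.mem_inf.mpr ⟨hxT, hC5G hx5⟩) hx5
  obtain ⟨hliW5, hspW5'⟩ := li_elim hlc5 hliW2413 hspc5 hspW2413 hdC5T
  have hsupC5T : C5 ⊔ T = T ⊔ G := by
    apply le_antisymm
    · exact sup_le (hC5G.trans le_sup_right) le_sup_left
    · refine sup_le le_sup_right ?_
      rw [← hsC5]
      exact sup_le (hIT.trans le_sup_right) le_sup_left
  have hspW5 : span F2 (range (Sum.elim c5 (Sum.elim c2 (Sum.elim c4 (Sum.elim c1 c3))))) =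
      T ⊔ G := by rw [hspW5', hsupC5T]
  obtain ⟨hliWC, hspWC'⟩ := li_elim hlc6 hliW5 hspc6 hspW5 hdC6.symm
  have hspWC : span F2 (range (Sum.elim c6
      (Sum.elim c5 (Sum.elim c2 (Sum.elim c4 (Sum.elim c1 c3)))))) = ⊤ := by
    rw [hspWC', sup_comm, hsC6]
  -- A-side
  set KF := LinearMap.ker f with hKFdef
  set KS := LinearMap.ker s with hKSdef
  set KFS := KF ⊓ KS with hKFSdef
  obtain ⟨P, hPKS, hdP, hsP⟩ := relcompl (inf_le_right : KFS ≤ KS)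
  obtain ⟨s₁, aS, hlaS, hspaS⟩ := exists_fam KFS
  obtain ⟨p₁, aP, hlaP, hspaP⟩ := exists_fam P
  have haSm : ∀ i, aS i ∈ KFS := fun i => hspaS ▸ subset_span (mem_range_self i)
  have haPm : ∀ i, aP i ∈ P := fun i => hspaP ▸ subset_span (mem_range_self i)
  have haSf : ∀ i, f (aS i) = 0 := fun i =>
    LinearMap.mem_ker.mp (Submodule.mem_inf.mp (haSm i)).1
  have haSs : ∀ i, s (aS i) = 0 := fun i =>
    LinearMap.mem_ker.mp (Submodule.mem_inf.mp (haSm i)).2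
  have haPs : ∀ i, s (aP i) = 0 := fun i => LinearMap.mem_ker.mp (hPKS (haPm i))
  choose a1 ha1k ha1s using fun i => Submodule.mem_map.mp (hC2Sg (hc2m i))
  choose a3 ha3k ha3s using fun i => Submodule.mem_map.mp (hC1Sg (hc1m i))
  choose a2 ha2s using fun i => LinearMap.mem_range.mp (hC4T (hc4m i))
  choose a4 ha4s using fun i => LinearMap.mem_range.mp (hIT (hC3I (hc3m i)))
  have ha1f : ∀ i, f (a1 i) = 0 := fun i => LinearMap.mem_ker.mp (ha1k i)
  have ha3f : ∀ i, f (a3 i) = 0 := fun i => LinearMap.mem_ker.mp (ha3k i)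
  set V : Fin x₁ ⊕ (Fin x₂ ⊕ (Fin x₃ ⊕ Fin x₄)) → A :=
    Sum.elim a1 (Sum.elim a2 (Sum.elim a3 a4)) with hVdef
  have hsV : ⇑s ∘ V = Sum.elim c2 (Sum.elim c4 (Sum.elim c1 c3)) := by
    funext i
    rcases i with i | i | i | i <;>
      simp [hVdef, ha1s, ha2s, ha3s, ha4s]
  have hlisV : LinearIndependent F2 (⇑s ∘ V) := by rw [hsV]; exact hliW2413
  have hliV : LinearIndependent F2 V := hlisV.of_comp s
  have hdVKS : Disjoint (span F2 (range V)) KS := disjoint_span_ker s hlisV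
  have hmapV : (span F2 (range V)).map s = T := by
    rw [Submodule.map_span, ← Set.range_comp, hsV, hspW2413]
  have hdP_V : Disjoint P (span F2 (range V)) := hdVKS.symm.mono_left hPKS
  obtain ⟨hliPV, hspPV⟩ := li_elim hlaP hliV hspaP rfl hdP_V
  have hdKFS_PV : Disjoint KFS (P ⊔ span F2 (range V)) := by
    refine Submodule.disjoint_def.mpr fun x hxK hxPV => ?_
    obtain ⟨p, hp, v, hv, rfl⟩ := Submodule.mem_sup.mp hxPV
    have hsv : v ∈ KS := by
      have h1 : s (p + v) = 0 :=
        LinearMap.mem_ker.mp (Submodule.mem_inf.mp hxK).2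
      have h2 : s p = 0 := LinearMap.mem_ker.mp (hPKS hp)
      have h3 : s v = 0 := by
        rw [map_add, h2, zero_add] at h1
        exact h1
      exact LinearMap.mem_ker.mpr h3
    have hv0 : v = 0 := Submodule.disjoint_def.mp hdVKS v hv hsv
    rw [hv0, add_zero] at hxK ⊢
    exact Submodule.disjoint_def.mp hdP p hxK hp
  obtain ⟨hliWA, hspWA'⟩ := li_elim hlaS hliPV hspaS hspPV hdKFS_PV
  have hspWA : span F2 (range (Sum.elim aS (Sum.elim aP V))) = ⊤ := by
    rw [hspWA']
    apply eq_top_of s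
    · rw [← hKSdef, ← hsP]
      exact sup_le le_sup_left (le_sup_left.trans le_sup_right)
    · rw [← hTdef, ← hmapV]
      exact Submodule.map_mono (le_sup_right.trans le_sup_right)
  -- B-side
  set KG := LinearMap.ker g with hKGdef
  set RF := LinearMap.range f with hRFdef
  have hgf0 : ∀ a, g (f a) = 0 := fun a => by
    have := LinearMap.ext_iff.mp hgf a
    simpa using this
  have hRFKG : RF ≤ KG := LinearMap.range_le_ker_iff.mpr hgf
  obtain ⟨B2, hB2KG, hdB2, hsB2⟩ := relcompl hRFKG
  obtain ⟨s₂, bS, hlbS, hspbS⟩ := exists_fam B2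
  have hbSm : ∀ i, bS i ∈ B2 := fun i => hspbS ▸ subset_span (mem_range_self i)
  have hbSg : ∀ i, g (bS i) = 0 := fun i => LinearMap.mem_ker.mp (hB2KG (hbSm i))
  choose bP2 hbP2 using fun i => LinearMap.mem_range.mp (hC5G (hc5m i))
  choose b3 hb3 using fun i => LinearMap.mem_range.mp (hC1G (hc1m i))
  choose b4 hb4 using fun i => LinearMap.mem_range.mp (hIG (hC3I (hc3m i)))
  set wA : Fin p₁ ⊕ (Fin x₂ ⊕ Fin x₄) → A := Sum.elim aP (Sum.elim a2 a4) with hwAdef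
  have hs24 : ⇑s ∘ (Sum.elim a2 a4 : Fin x₂ ⊕ Fin x₄ → A) = Sum.elim c4 c3 := by
    funext i; rcases i with i | i <;> simp [ha2s, ha4s]
  have hdC43 : Disjoint C4 C3 := (hdC4.mono_left (hC3I.trans le_sup_right)).symm
  obtain ⟨hliW43, hspW43⟩ := li_elim hlc4 hlc3 hspc4 hspc3 hdC43
  have hlis24 : LinearIndependent F2 (⇑s ∘ (Sum.elim a2 a4)) := by
    rw [hs24]; exact hliW43
  have hli24 : LinearIndependent F2 (Sum.elim a2 a4) := hlis24.of_comp s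
  have hd24KS : Disjoint (span F2 (range (Sum.elim a2 a4))) KS :=
    disjoint_span_ker s hlis24
  have hmap24 : (span F2 (range (Sum.elim a2 a4))).map s = C4 ⊔ C3 := by
    rw [Submodule.map_span, ← Set.range_comp, hs24, Sum.elim_range, span_union,
      hspc4, hspc3]
  have hdP24 : Disjoint P (span F2 (range (Sum.elim a2 a4))) := hd24KS.symm.mono_left hPKS
  obtain ⟨hliwA, hspwA⟩ := li_elim hlaP hli24 hspaP rfl hdP24
  have hdwAKF : Disjoint (span F2 (range wA)) KF := by
    refine Submodule.disjoint_def.mpr fun x hx hxf => ?_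
    rw [hwAdef, hspwA] at hx
    obtain ⟨p, hp, u, hu, rfl⟩ := Submodule.mem_sup.mp hx
    have hsu : s u ∈ (C4 ⊔ C3 : Submodule F2 C) := by
      have h1 : s u ∈ (span F2 (range (Sum.elim a2 a4))).map s :=
        Submodule.mem_map_of_mem hu
      rwa [hmap24] at h1
    rw [Submodule.mem_sup] at hsu
    obtain ⟨y4, hy4, y3, hy3, hsum⟩ := hsu
    have hsu' : s u ∈ Sg := by
      have h2 : s (p + u) ∈ Sg := Submodule.mem_map_of_mem hxf
      have h3 : s p = 0 := LinearMap.mem_ker.mp (hPKS hp)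
      rwa [map_add, h3, zero_add] at h2
    have hy40 : y4 = 0 := by
      have hmem : y4 ∈ Sg ⊔ I := by
        have h4 : y4 = s u - y3 := by rw [← hsum]; abel
        rw [h4]
        exact Submodule.sub_mem _ (Submodule.mem_sup_left hsu')
          (Submodule.mem_sup_right (hC3I hy3))
      exact Submodule.disjoint_def.mp hdC4 y4 hmem hy4
    have hy30 : y3 = 0 := by
      have h5 : y3 = s u := by rw [← hsum, hy40, zero_add]
      have h6 : y3 ∈ C1 := Submodule.mem_inf.mpr ⟨h5 ▸ hsu', hIG (hC3I hy3)⟩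
      exact Submodule.disjoint_def.mp hdC13 y3 h6 hy3
    have hsu0 : s u = 0 := by rw [← hsum, hy40, hy30, add_zero]
    have hu0 : u = 0 :=
      Submodule.disjoint_def.mp hd24KS u hu (LinearMap.mem_ker.mpr hsu0)
    rw [hu0, add_zero] at hxf ⊢
    exact Submodule.disjoint_def.mp hdP p
      (Submodule.mem_inf.mpr ⟨hxf, hPKS hp⟩) hp
  have hlifwA : LinearIndependent F2 (⇑f ∘ wA) := hliwA.map hdwAKF
  have hspfwA : span F2 (range (⇑f ∘ wA)) = RF := by
    rw [Set.range_comp, ← Submodule.map_span]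
    apply le_antisymm LinearMap.map_le_range
    have htop : KF ⊔ span F2 (range wA) = ⊤ := by
      rw [eq_top_iff, ← hspWA, span_le]
      rintro x ⟨i, rfl⟩
      simp only [SetLike.mem_coe]
      rcases i with i | i | i | i | i | i
      · exact Submodule.mem_sup_left (Submodule.mem_inf.mp (haSm i)).1
      · exact Submodule.mem_sup_right (subset_span ⟨Sum.inl i, rfl⟩)
      · exact Submodule.mem_sup_left (ha1k i)
      · exact Submodule.mem_sup_right (subset_span ⟨Sum.inr (Sum.inl i), rfl⟩)
      · exact Submodule.mem_sup_left (ha3k i)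
      · exact Submodule.mem_sup_right (subset_span ⟨Sum.inr (Sum.inr i), rfl⟩)
    have hcalc : RF = Submodule.map f (span F2 (range wA)) := by
      rw [← map_ker_sup f (span F2 (range wA)), ← hKFdef, htop, Submodule.map_top]
    exact le_of_eq hcalc
  obtain ⟨hliwK, hspwK⟩ := li_elim hlbS hlifwA hspbS hspfwA hdB2.symm
  have hsupB : B2 ⊔ RF = KG := by rw [sup_comm]; exact hsB2
  set wU : Fin p₂ ⊕ (Fin x₃ ⊕ Fin x₄) → B := Sum.elim bP2 (Sum.elim b3 b4) with hwUdef
  have hgU : ⇑g ∘ wU = Sum.elim c5 (Sum.elim c1 c3) := by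
    funext i; rcases i with i | i | i <;> simp [hwUdef, hbP2, hb3, hb4]
  obtain ⟨hliW513, hspW513'⟩ := li_elim hlc5 hliW13 hspc5 hspW13 hdC5.symm
  have hspW513 : span F2 (range (Sum.elim c5 (Sum.elim c1 c3))) = G := by
    rw [hspW513', sup_comm, hsC5]
  have hligU : LinearIndependent F2 (⇑g ∘ wU) := by rw [hgU]; exact hliW513
  have hliwU : LinearIndependent F2 wU := hligU.of_comp g
  have hdwUKG : Disjoint (span F2 (range wU)) KG := disjoint_span_ker g hligU
  have hmapwU : (span F2 (range wU)).map g = G := by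
    rw [Submodule.map_span, ← Set.range_comp, hgU, hspW513]
  have hdwKwU : Disjoint (B2 ⊔ RF) (span F2 (range wU)) := by
    rw [hsupB]; exact hdwUKG.symm
  obtain ⟨hliWB, hspWB'⟩ := li_elim hliwK hliwU hspwK rfl hdwKwU
  have hspWB : span F2 (range (Sum.elim (Sum.elim bS (⇑f ∘ wA)) wU)) = ⊤ := by
    rw [hspWB', hsupB]
    apply eq_top_of g
    · exact le_sup_left
    · rw [← hGdef, ← hmapwU]
      exact Submodule.map_mono le_sup_right
  -- index equivalence for the B side
  let e : (Fin s₂ ⊕ (Fin p₁ ⊕ (Fin p₂ ⊕ (Fin x₂ ⊕ (Fin x₃ ⊕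
        ((_ : Fin x₄) × (Unit ⊕ Unit))))))) ≃
      ((Fin s₂ ⊕ (Fin p₁ ⊕ (Fin x₂ ⊕ Fin x₄))) ⊕ (Fin p₂ ⊕ (Fin x₃ ⊕ Fin x₄))) :=
    { toFun := fun i =>
        match i with
        | Sum.inl j => Sum.inl (Sum.inl j)
        | Sum.inr (Sum.inl j) => Sum.inl (Sum.inr (Sum.inl j))
        | Sum.inr (Sum.inr (Sum.inl j)) => Sum.inr (Sum.inl j)
        | Sum.inr (Sum.inr (Sum.inr (Sum.inl j))) => Sum.inl (Sum.inr (Sum.inr (Sum.inl j)))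
        | Sum.inr (Sum.inr (Sum.inr (Sum.inr (Sum.inl j)))) => Sum.inr (Sum.inr (Sum.inl j))
        | Sum.inr (Sum.inr (Sum.inr (Sum.inr (Sum.inr ⟨j, Sum.inl _⟩)))) =>
            Sum.inl (Sum.inr (Sum.inr (Sum.inr j)))
        | Sum.inr (Sum.inr (Sum.inr (Sum.inr (Sum.inr ⟨j, Sum.inr _⟩)))) =>
            Sum.inr (Sum.inr (Sum.inr j))
      invFun := fun i =>
        match i with
        | Sum.inl (Sum.inl j) => Sum.inl j
        | Sum.inl (Sum.inr (Sum.inl j)) => Sum.inr (Sum.inl j)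
        | Sum.inl (Sum.inr (Sum.inr (Sum.inl j))) =>
            Sum.inr (Sum.inr (Sum.inr (Sum.inl j)))
        | Sum.inl (Sum.inr (Sum.inr (Sum.inr j))) =>
            Sum.inr (Sum.inr (Sum.inr (Sum.inr (Sum.inr ⟨j, Sum.inl ()⟩))))
        | Sum.inr (Sum.inl j) => Sum.inr (Sum.inr (Sum.inl j))
        | Sum.inr (Sum.inr (Sum.inl j)) =>
            Sum.inr (Sum.inr (Sum.inr (Sum.inr (Sum.inl j))))
        | Sum.inr (Sum.inr (Sum.inr j)) =>
            Sum.inr (Sum.inr (Sum.inr (Sum.inr (Sum.inr ⟨j, Sum.inr ()⟩))))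
      left_inv := by rintro (j | j | j | j | j | ⟨j, ⟨⟩ | ⟨⟩⟩) <;> rfl
      right_inv := by rintro ((j | j | j | j) | (j | j | j)) <;> rfl }
  -- bases
  let bA : Module.Basis _ F2 A := Module.Basis.mk hliWA hspWA.ge
  let bB : Module.Basis _ F2 B := Module.Basis.mk (hliWB.comp e e.injective)
    (by rw [Function.Surjective.range_comp e.surjective]; exact hspWB.ge)
  let bC : Module.Basis _ F2 C := Module.Basis.mk hliWC hspWC.ge
  let α := bA.equiv (basisQA s₁ p₁ x₁ x₂ x₃ x₄) (Equiv.refl _)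
  let β := bB.equiv (basisQB s₂ p₁ p₂ x₂ x₃ x₄) (Equiv.refl _)
  let γ := bC.equiv (basisQC s₃ p₂ x₁ x₂ x₃ x₄) (Equiv.refl _)
  have hα : ∀ i, α (bA i) = basisQA s₁ p₁ x₁ x₂ x₃ x₄ i :=
    fun i => bA.equiv_apply i _ (Equiv.refl _)
  have hβ : ∀ i, β (bB i) = basisQB s₂ p₁ p₂ x₂ x₃ x₄ i :=
    fun i => bB.equiv_apply i _ (Equiv.refl _)
  have hγ : ∀ i, γ (bC i) = basisQC s₃ p₂ x₁ x₂ x₃ x₄ i :=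
    fun i => bC.equiv_apply i _ (Equiv.refl _)
  have hbA : ∀ i, bA i = Sum.elim aS (Sum.elim aP V) i := fun i => Module.Basis.mk_apply _ _ i
  have hbB : ∀ i, bB i = (Sum.elim (Sum.elim bS (⇑f ∘ wA)) wU ∘ ⇑e) i :=
    fun i => Module.Basis.mk_apply _ _ i
  have hbC : ∀ i,
      bC i = Sum.elim c6 (Sum.elim c5 (Sum.elim c2 (Sum.elim c4 (Sum.elim c1 c3)))) i :=
    fun i => Module.Basis.mk_apply _ _ i
  refine ⟨s₁, s₂, s₃, p₁, p₂, x₁, x₂, x₃, x₄, α, β, γ, ?_, ?_, ?_⟩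
  · -- β ∘ f = fQ ∘ α
    have h1 : (β : B →ₗ[F2] QB s₂ p₁ p₂ x₂ x₃ x₄) ∘ₗ f
        = fQ ∘ₗ (α : A →ₗ[F2] QA s₁ p₁ x₁ x₂ x₃ x₄) := by
      refine bA.ext fun i => ?_
      simp only [LinearMap.comp_apply, LinearEquiv.coe_coe]
      rcases i with j | j | j | j | j | j
      · rw [hα, fQ_a1]
        have hz : f (bA (Sum.inl j)) = 0 := by rw [hbA]; exact haSf j
        rw [hz, map_zero]
      · rw [hα, fQ_a2, ← hβ]
        congr 1
        rw [hbA, hbB]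
        rfl
      · rw [hα, fQ_a3]
        have hz : f (bA (Sum.inr (Sum.inr (Sum.inl j)))) = 0 := by
          rw [hbA]; exact ha1f j
        rw [hz, map_zero]
      · rw [hα, fQ_a4, ← hβ]
        congr 1
        rw [hbA, hbB]
        rfl
      · rw [hα, fQ_a5]
        have hz : f (bA (Sum.inr (Sum.inr (Sum.inr (Sum.inr (Sum.inl j)))))) = 0 := by
          rw [hbA]; exact ha3f j
        rw [hz, map_zero]
      · rw [hα, fQ_a6, ← hβ]
        congr 1
        rw [hbA, hbB]
        rfl
    intro a
    have := LinearMap.ext_iff.mp h1 a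
    simpa using this
  · -- γ ∘ g = gQ ∘ β
    have h2 : (γ : C →ₗ[F2] QC s₃ p₂ x₁ x₂ x₃ x₄) ∘ₗ g
        = gQ ∘ₗ (β : B →ₗ[F2] QB s₂ p₁ p₂ x₂ x₃ x₄) := by
      refine bB.ext fun i => ?_
      simp only [LinearMap.comp_apply, LinearEquiv.coe_coe]
      rcases i with j | j | j | j | j | ⟨j, ⟨⟩ | ⟨⟩⟩
      · rw [hβ, gQ_b1]
        have hz : g (bB (Sum.inl j)) = 0 := by rw [hbB]; exact hbSg j
        rw [hz, map_zero]
      · rw [hβ, gQ_b2]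
        have hz : g (bB (Sum.inr (Sum.inl j))) = 0 := by
          rw [hbB]; exact hgf0 (aP j)
        rw [hz, map_zero]
      · rw [hβ, gQ_b3, ← hγ]
        congr 1
        rw [hbB, hbC]
        exact hbP2 j
      · rw [hβ, gQ_b4]
        have hz : g (bB (Sum.inr (Sum.inr (Sum.inr (Sum.inl j))))) = 0 := by
          rw [hbB]; exact hgf0 (a2 j)
        rw [hz, map_zero]
      · rw [hβ, gQ_b5, ← hγ]
        congr 1
        rw [hbB, hbC]
        exact hb3 j
      · rw [hβ, gQ_b6]
        have hz : g (bB (Sum.inr (Sum.inr (Sum.inr (Sum.inr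
            (Sum.inr ⟨j, Sum.inl ()⟩)))))) = 0 := by
          rw [hbB]; exact hgf0 (a4 j)
        rw [hz, map_zero]
      · rw [hβ, gQ_b7, ← hγ]
        congr 1
        rw [hbB, hbC]
        exact hb4 j
    intro b
    have := LinearMap.ext_iff.mp h2 b
    simpa using this
  · -- γ ∘ s = sQ ∘ α
    have h3 : (γ : C →ₗ[F2] QC s₃ p₂ x₁ x₂ x₃ x₄) ∘ₗ s
        = sQ ∘ₗ (α : A →ₗ[F2] QA s₁ p₁ x₁ x₂ x₃ x₄) := by
      refine bA.ext fun i => ?_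
      simp only [LinearMap.comp_apply, LinearEquiv.coe_coe]
      rcases i with j | j | j | j | j | j
      · rw [hα, sQ_a1]
        have hz : s (bA (Sum.inl j)) = 0 := by rw [hbA]; exact haSs j
        rw [hz, map_zero]
      · rw [hα, sQ_a2]
        have hz : s (bA (Sum.inr (Sum.inl j))) = 0 := by rw [hbA]; exact haPs j
        rw [hz, map_zero]
      · rw [hα, sQ_a3, ← hγ]
        congr 1
        rw [hbA, hbC]
        exact ha1s j
      · rw [hα, sQ_a4, ← hγ]
        congr 1
        rw [hbA, hbC]
        exact ha2s j
      · rw [hα, sQ_a5, ← hγ]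
        congr 1
        rw [hbA, hbC]
        exact ha3s j
      · rw [hα, sQ_a6, ← hγ]
        congr 1
        rw [hbA, hbC]
        exact ha4s j
    intro a
    have := LinearMap.ext_iff.mp h3 a
    simpa using this
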